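/- If α > 0 and β > 0, then for every k ≥ 0 the weighted moment E_P[w_P(X)‖X‖^k] is finite. More precisely, w_P(v) > 0 implies r_P(v) ≤ G_P⁻¹(1−β), and hence E_P[w_P(X)‖X‖^k] ≤ (sup g)·(K + G_P⁻¹(1−β))^k, where K is a constant with ‖v‖ ≤ r_P(v) + K for all v ∈ H and G_P⁻¹(1−β) = inf{t : G_P(t) ≥ 1−β}. -/

import Mathlib

open MeasureTheory
open scoped RealInnerProductSpace

/-- `F_P(t; v) = P(‖X − v‖ ≤ t)`. -/
noncomputable def Fpop {H : Type*} [NormedAddCommGroup H] [MeasurableSpace H]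
    (P : Measure H) (t : ℝ) (v : H) : ℝ :=
  (P {x | ‖x - v‖ ≤ t}).toReal

/-- The α-radius `r_P(v) = inf {t ≥ 0 : F_P(t; v) ≥ α}`. -/
noncomputable def rpop {H : Type*} [NormedAddCommGroup H] [MeasurableSpace H]
    (α : ℝ) (P : Measure H) (v : H) : ℝ :=
  sInf {t : ℝ | 0 ≤ t ∧ α ≤ Fpop P t v}

/-- `G_P(t) = P(r_P(X) ≤ t)`. -/
noncomputable def Gpop {H : Type*} [NormedAddCommGroup H] [MeasurableSpace H]
    (α : ℝ) (P : Measure H) (t : ℝ) : ℝ :=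
  (P {x | rpop α P x ≤ t}).toReal

/-- The population weight function `w_P(v) = g(G_P(r_P(v)))`. -/
noncomputable def wpop {H : Type*} [NormedAddCommGroup H] [MeasurableSpace H]
    (g : ℝ → ℝ) (α : ℝ) (P : Measure H) (v : H) : ℝ :=
  g (Gpop α P (rpop α P v))

/-- The population trimmed mean `μ(P) = E_P[w_P(X)X] / E_P[w_P(X)]`. -/
noncomputable def meanPop {H : Type*} [NormedAddCommGroup H] [InnerProductSpace ℝ H]
    [CompleteSpace H] [MeasurableSpace H] (g : ℝ → ℝ) (α : ℝ) (P : Measure H) : H :=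
  (∫ x, wpop g α P x ∂P)⁻¹ • ∫ x, wpop g α P x • x ∂P

/-- The population trimmed covariance operator
`C(P)(h) = E_P[w_P(X)⟨X − μ(P), h⟩(X − μ(P))] / E_P[w_P(X)]`. -/
noncomputable def covPop {H : Type*} [NormedAddCommGroup H] [InnerProductSpace ℝ H]
    [CompleteSpace H] [MeasurableSpace H] (g : ℝ → ℝ) (α : ℝ) (P : Measure H) (h : H) : H :=
  (∫ x, wpop g α P x ∂P)⁻¹ •
    ∫ x, (wpop g α P x * ⟪x - meanPop g α P, h⟫) • (x - meanPop g α P) ∂P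

/-- If `α > 0` and `β > 0`, every weighted moment `E_P[w_P(X)‖X‖^k]` is
finite. More precisely, `w_P(v) > 0` implies `r_P(v) ≤ G_P⁻¹(1−β)`, and hence
`E_P[w_P(X)‖X‖^k] ≤ (sup g)·(K + G_P⁻¹(1−β))^k`, where `K` satisfies
`‖v‖ ≤ r_P(v) + K` for all `v` and `G_P⁻¹(1−β) = inf {t : G_P(t) ≥ 1−β}`. -/
theorem weighted_moments_finite
    {H : Type*} [NormedAddCommGroup H] [InnerProductSpace ℝ H] [CompleteSpace H]
    [SecondCountableTopology H] [MeasurableSpace H] [BorelSpace H]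
    (P : Measure H) [IsProbabilityMeasure P]
    (α β : ℝ) (hα : 0 < α) (hα' : α ≤ 1 / 2) (hβ : 0 < β) (hβ' : β ≤ 1 / 2)
    (g : ℝ → ℝ)
    (hg_nonneg : ∀ t ∈ Set.Icc (0 : ℝ) 1, 0 ≤ g t)
    (hg_bdd : BddAbove (g '' Set.Icc (0 : ℝ) 1))
    (hg_mono : AntitoneOn g (Set.Icc (0 : ℝ) 1))
    (hg_pos : ∀ t ∈ Set.Icc (0 : ℝ) 1, t < 1 - β → 0 < g t)
    (hg_zero : ∀ t ∈ Set.Icc (0 : ℝ) 1, 1 - β ≤ t → g t = 0)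
    (K : ℝ) (hK : ∀ v : H, ‖v‖ ≤ rpop α P v + K) :
    (∀ v : H, 0 < wpop g α P v →
        rpop α P v ≤ sInf {t : ℝ | 1 - β ≤ Gpop α P t}) ∧
    (∀ k : ℕ,
      (∫⁻ x, ENNReal.ofReal (wpop g α P x * ‖x‖ ^ k) ∂P) ≤
        ENNReal.ofReal (sSup (g '' Set.Icc (0 : ℝ) 1) *
          (K + sInf {t : ℝ | 1 - β ≤ Gpop α P t}) ^ k)) ∧
    (∀ k : ℕ, (∫⁻ x, ENNReal.ofReal (wpop g α P x * ‖x‖ ^ k) ∂P) < ⊤) := by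

  classical
  set S : Set ℝ := {t : ℝ | 1 - β ≤ Gpop α P t} with hS
  set M : ℝ := sSup (g '' Set.Icc (0 : ℝ) 1) with hM
  -- basic facts
  have hr0 : ∀ v : H, 0 ≤ rpop α P v := fun v =>
    Real.sInf_nonneg (fun t ht => ht.1)
  have hPle : ∀ s : Set H, (P s).toReal ≤ 1 := by
    intro s
    have h1 : (P s).toReal ≤ (P Set.univ).toReal :=
      ENNReal.toReal_mono (measure_ne_top P _) (measure_mono (Set.subset_univ _))
    simpa using h1
  have hG01 : ∀ t : ℝ, Gpop α P t ∈ Set.Icc (0 : ℝ) 1 := fun t =>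
    ⟨ENNReal.toReal_nonneg, hPle _⟩
  have hGmono : Monotone (Gpop α P) := by
    intro s t hst
    exact ENNReal.toReal_mono (measure_ne_top P _)
      (measure_mono fun x hx => le_trans hx hst)
  have hw_nonneg : ∀ x : H, 0 ≤ wpop g α P x := fun x =>
    hg_nonneg _ (hG01 _)
  have hw_le : ∀ x : H, wpop g α P x ≤ M := fun x =>
    le_csSup hg_bdd ⟨_, hG01 _, rfl⟩
  have hM0 : 0 ≤ M :=
    le_trans (hg_nonneg 1 ⟨zero_le_one, le_refl 1⟩)
      (le_csSup hg_bdd ⟨1, ⟨zero_le_one, le_refl 1⟩, rfl⟩)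
  -- closed balls exhaust the space in measure
  have hball : ∀ c : ℝ, c < 1 → ∃ n : ℕ, c ≤ (P (Metric.closedBall (0 : H) n)).toReal := by
    intro c hc
    have hdir : Directed (fun x1 x2 : Set H => x1 ⊆ x2)
        (fun n : ℕ => Metric.closedBall (0 : H) n) := by
      intro m n
      refine ⟨max m n, Metric.closedBall_subset_closedBall ?_,
        Metric.closedBall_subset_closedBall ?_⟩
      · exact_mod_cast le_max_left m n
      · exact_mod_cast le_max_right m n
    have hun : (⋃ n : ℕ, Metric.closedBall (0 : H) n) = Set.univ := by
      ext x
      simp only [Set.mem_iUnion, Metric.mem_closedBall, dist_zero_right, Set.mem_univ,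
        iff_true]
      exact exists_nat_ge ‖x‖
    have hsup : (⨆ n : ℕ, P (Metric.closedBall (0 : H) n)) = 1 := by
      rw [← hdir.measure_iUnion, hun, measure_univ]
    have hlt : ENNReal.ofReal c < ⨆ n : ℕ, P (Metric.closedBall (0 : H) n) := by
      rw [hsup]; exact ENNReal.ofReal_lt_one.2 hc
    obtain ⟨n, hn⟩ := lt_iSup_iff.1 hlt
    exact ⟨n, (ENNReal.ofReal_le_iff_le_toReal (measure_ne_top P _)).1 hn.le⟩
  -- a radius around 0
  obtain ⟨n0, hn0⟩ := hball α (lt_of_le_of_lt hα' (by norm_num))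
  set t0 : ℝ := (n0 : ℝ) with ht0
  have ht0nn : 0 ≤ t0 := Nat.cast_nonneg n0
  have hF0 : α ≤ Fpop P t0 0 := by
    have : Metric.closedBall (0 : H) n0 = {x : H | ‖x - 0‖ ≤ t0} := by
      ext x; simp [Metric.mem_closedBall, dist_zero_right, ht0]
    rw [Fpop, ← this]
    exact hn0
  have hr_le : ∀ x : H, rpop α P x ≤ ‖x‖ + t0 := by
    intro x
    apply csInf_le ⟨0, fun t ht => ht.1⟩
    refine ⟨add_nonneg (norm_nonneg x) ht0nn, le_trans hF0 ?_⟩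
    apply ENNReal.toReal_mono (measure_ne_top P _)
    apply measure_mono
    intro y hy
    simp only [Set.mem_setOf_eq, sub_zero] at hy ⊢
    calc ‖y - x‖ ≤ ‖y‖ + ‖x‖ := norm_sub_le y x
      _ ≤ t0 + ‖x‖ := by linarith
      _ = ‖x‖ + t0 := add_comm _ _
  have hβ1 : (0 : ℝ) < 1 - β := by linarith
  -- S nonempty and bounded below
  have hS_ne : S.Nonempty := by
    obtain ⟨n, hn⟩ := hball (1 - β) (by linarith)
    refine ⟨(n : ℝ) + t0, ?_⟩
    show 1 - β ≤ Gpop α P ((n : ℝ) + t0)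
    refine le_trans hn ?_
    apply ENNReal.toReal_mono (measure_ne_top P _)
    apply measure_mono
    intro x hx
    simp only [Metric.mem_closedBall, dist_zero_right] at hx
    show rpop α P x ≤ (n : ℝ) + t0
    calc rpop α P x ≤ ‖x‖ + t0 := hr_le x
      _ ≤ (n : ℝ) + t0 := by linarith
  have hS_sub : S ⊆ Set.Ici (0 : ℝ) := by
    intro t ht
    by_contra h
    have htneg : t < 0 := lt_of_not_ge h
    have hemp : {x : H | rpop α P x ≤ t} = ∅ := by
      ext x
      simp only [Set.mem_setOf_eq, Set.mem_empty_iff_false, iff_false, not_le]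
      exact lt_of_lt_of_le htneg (hr0 x)
    have : Gpop α P t = 0 := by rw [Gpop, hemp]; simp
    rw [hS] at ht
    simp only [Set.mem_setOf_eq] at ht
    rw [this] at ht
    linarith
  have hS_bdd : BddBelow S := ⟨0, fun t ht => hS_sub ht⟩
  have htstar0 : 0 ≤ sInf S := le_csInf hS_ne (fun t ht => hS_sub ht)
  -- Part 1
  have part1 : ∀ v : H, 0 < wpop g α P v → rpop α P v ≤ sInf S := by
    intro v hv
    by_contra h
    push_neg at h
    obtain ⟨s, hsS, hs⟩ := (csInf_lt_iff hS_bdd hS_ne).1 h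
    have h1 : 1 - β ≤ Gpop α P s := hsS
    have h2 : 1 - β ≤ Gpop α P (rpop α P v) := le_trans h1 (hGmono hs.le)
    have h3 : wpop g α P v = 0 := hg_zero _ (hG01 _) h2
    rw [h3] at hv
    exact lt_irrefl 0 hv
  -- Part 2
  have part2 : ∀ k : ℕ,
      (∫⁻ x, ENNReal.ofReal (wpop g α P x * ‖x‖ ^ k) ∂P) ≤
        ENNReal.ofReal (M * (K + sInf S) ^ k) := by
    intro k
    by_cases hKt : 0 ≤ K + sInf S
    · have hpt : ∀ x : H, wpop g α P x * ‖x‖ ^ k ≤ M * (K + sInf S) ^ k := by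
        intro x
        rcases (hw_nonneg x).eq_or_lt with h | h
        · rw [← h, zero_mul]
          exact mul_nonneg hM0 (pow_nonneg hKt k)
        · have hxb : ‖x‖ ≤ K + sInf S := by
            have := hK x
            have := part1 x h
            linarith
          exact mul_le_mul (hw_le x) (pow_le_pow_left₀ (norm_nonneg x) hxb k)
            (pow_nonneg (norm_nonneg x) k) hM0
      calc (∫⁻ x, ENNReal.ofReal (wpop g α P x * ‖x‖ ^ k) ∂P)
          ≤ ∫⁻ _x, ENNReal.ofReal (M * (K + sInf S) ^ k) ∂P :=
            lintegral_mono fun x => ENNReal.ofReal_le_ofReal (hpt x)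
        _ = ENNReal.ofReal (M * (K + sInf S) ^ k) := by
            rw [lintegral_const, measure_univ, mul_one]
    · push_neg at hKt
      have hw0 : ∀ x : H, wpop g α P x = 0 := by
        intro x
        rcases (hw_nonneg x).eq_or_lt with h | h
        · exact h.symm
        · exfalso
          have h1 := hK x
          have h2 := part1 x h
          have := norm_nonneg x
          linarith
      have : (∫⁻ x, ENNReal.ofReal (wpop g α P x * ‖x‖ ^ k) ∂P) = 0 := by
        have : ∀ x : H, ENNReal.ofReal (wpop g α P x * ‖x‖ ^ k) = 0 := by
          intro x; rw [hw0 x, zero_mul]; simp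
        simp only [this, lintegral_const, zero_mul]
      rw [this]
      exact zero_le
  exact ⟨part1, part2, fun k => lt_of_le_of_lt (part2 k) ENNReal.ofReal_lt_top⟩
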